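/- For integers q ≥ 0 and n ≥ 0, the number of q-ballot sequences with n 1's, i.e. q-satisfying sequences with exactly n 1's and qn 0's, equals the generalized Catalan number C_n^q = (1/(qn+1)) · binom((q+1)n, n). -/

import Mathlib

/-- A sequence of 0's (`false`) and 1's (`true`) is `q`-satisfying if in every
prefix the number of 0's is at least `q` times the number of 1's. -/
def QSatisfying (q : ℕ) (l : List Bool) : Prop :=
  ∀ m : ℕ, m ≤ l.length →
    q * (l.take m).count true ≤ (l.take m).count false

namespace QBallotAux

/-- The set of `q`-satisfying sequences with `a` zeros and `b` ones. -/
def S (q a b : ℕ) : Set (List Bool) :=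
  {l | l.count true = b ∧ l.count false = a ∧ QSatisfying q l}

lemma count_add_count (l : List Bool) : l.count true + l.count false = l.length := by
  induction l with
  | nil => simp
  | cons x l ih => cases x <;> simp [List.count_cons] <;> omega

lemma length_of_mem {q a b : ℕ} {l : List Bool} (h : l ∈ S q a b) : l.length = b + a := by
  obtain ⟨h1, h2, -⟩ := h
  rw [← h1, ← h2, count_add_count]

lemma finite_S (q a b : ℕ) : (S q a b).Finite :=
  (List.finite_length_eq Bool (b + a)).subset fun _ hl => length_of_mem hl

lemma S_eq_empty {q a b : ℕ} (h : a < q * b) : S q a b = ∅ := by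
  ext l
  simp only [Set.mem_empty_iff_false, iff_false]
  rintro ⟨h1, h2, hq⟩
  have := hq l.length le_rfl
  rw [List.take_length, h1, h2] at this
  omega

lemma S_b_zero (q a : ℕ) : S q a 0 = {List.replicate a false} := by
  ext l
  simp only [Set.mem_singleton_iff]
  constructor
  · rintro ⟨h1, h2, -⟩
    have hall : ∀ x ∈ l, x = false := by
      intro x hx
      cases x
      · rfl
      · exact absurd hx (List.count_eq_zero.mp h1)
    have hlen : l.length = a := by
      rw [← h2]
      exact ((List.count_eq_length).mpr fun b hb => (hall b hb).symm).symm
    exact List.eq_replicate_iff.mpr ⟨hlen, hall⟩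
  · rintro rfl
    refine ⟨by simp [List.count_replicate], by simp [List.count_replicate], fun m hm => ?_⟩
    simp [List.take_replicate, List.count_replicate]

lemma S_a_zero {q b : ℕ} (h : q * b = 0) : S q 0 b = {List.replicate b true} := by
  ext l
  simp only [Set.mem_singleton_iff]
  constructor
  · rintro ⟨h1, h2, -⟩
    have hall : ∀ x ∈ l, x = true := by
      intro x hx
      cases x
      · exact absurd hx (List.count_eq_zero.mp h2)
      · rfl
    have hlen : l.length = b := by
      rw [← h1]
      exact ((List.count_eq_length).mpr fun c hc => (hall c hc).symm).symm
    exact List.eq_replicate_iff.mpr ⟨hlen, hall⟩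
  · rintro rfl
    refine ⟨by simp [List.count_replicate], by simp [List.count_replicate], fun m hm => ?_⟩
    rcases Nat.mul_eq_zero.mp h with hq | hb
    · simp [hq]
    · simp [hb]

lemma qsat_append {q : ℕ} {l : List Bool} {x : Bool} :
    QSatisfying q (l ++ [x]) ↔
      QSatisfying q l ∧ q * (l ++ [x]).count true ≤ (l ++ [x]).count false := by
  constructor
  · intro h
    refine ⟨fun m hm => ?_, ?_⟩
    · have := h m (by simp; omega)
      rwa [List.take_append_of_le_length hm] at this
    · have := h (l.length + 1) (by simp)
      rwa [List.take_of_length_le (by simp)] at this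
  · rintro ⟨h1, h2⟩ m hm
    rcases le_or_gt m l.length with hc | hc
    · rw [List.take_append_of_le_length hc]
      exact h1 m hc
    · rw [List.take_of_length_le (by simp at hm ⊢; omega)]
      exact h2

lemma S_decomp {q a b : ℕ} (h : q * (b + 1) ≤ a + 1) :
    S q (a + 1) (b + 1) =
      (fun l => l ++ [false]) '' S q a (b + 1) ∪ (fun l => l ++ [true]) '' S q (a + 1) b := by
  ext l
  constructor
  · rintro ⟨h1, h2, hq⟩
    rcases l.eq_nil_or_concat' with rfl | ⟨L, x, rfl⟩
    · simp at h1
    · rw [qsat_append] at hq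
      simp only [List.count_append] at h1 h2
      cases x
      · left
        refine ⟨L, ⟨?_, ?_, hq.1⟩, rfl⟩
        · simp at h1; omega
        · simp at h2; omega
      · right
        refine ⟨L, ⟨?_, ?_, hq.1⟩, rfl⟩
        · simp at h1; omega
        · simp at h2; omega
  · rintro (⟨L, ⟨h1, h2, hq⟩, rfl⟩ | ⟨L, ⟨h1, h2, hq⟩, rfl⟩)
    · have hc1 : (L ++ [false]).count true = b + 1 := by simp [List.count_append]; omega
      have hc2 : (L ++ [false]).count false = a + 1 := by simp [List.count_append]; omega
      exact ⟨hc1, hc2, qsat_append.mpr ⟨hq, by rw [hc1, hc2]; exact h⟩⟩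
    · have hc1 : (L ++ [true]).count true = b + 1 := by simp [List.count_append]; omega
      have hc2 : (L ++ [true]).count false = a + 1 := by simp [List.count_append]; omega
      exact ⟨hc1, hc2, qsat_append.mpr ⟨hq, by rw [hc1, hc2]; exact h⟩⟩

lemma append_inj (x : Bool) : Function.Injective (fun l : List Bool => l ++ [x]) := by
  intro l1 l2 hh
  simpa using hh

lemma ncard_decomp {q a b : ℕ} (h : q * (b + 1) ≤ a + 1) :
    (S q (a + 1) (b + 1)).ncard = (S q a (b + 1)).ncard + (S q (a + 1) b).ncard := by
  rw [S_decomp h, Set.ncard_union_eq ?_ ((finite_S q a (b+1)).image _)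
      ((finite_S q (a+1) b).image _),
    Set.ncard_image_of_injective _ (append_inj false),
    Set.ncard_image_of_injective _ (append_inj true)]
  rw [Set.disjoint_left]
  rintro l ⟨L1, -, rfl⟩ ⟨L2, -, heq⟩
  have := congrArg (fun t => t.getLast?) heq
  simp at this

lemma main (q : ℕ) : ∀ b a : ℕ, q * b ≤ a →
    ((S q a b).ncard : ℚ) * (a + 1) =
      ((a : ℚ) + 1 - q * b) * Nat.choose (a + b) b := by
  intro b
  induction b with
  | zero =>
    intro a _
    rw [S_b_zero, Set.ncard_singleton]
    simp
  | succ b ihb =>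
    intro a
    induction a with
    | zero =>
      intro h
      have hq0 : q = 0 := by
        rcases Nat.mul_eq_zero.mp (Nat.le_zero.mp h) with h' | h'
        · exact h'
        · omega
      subst hq0
      rw [S_a_zero (by ring), Set.ncard_singleton]
      simp
    | succ a iha =>
      intro h
      have hcard : ((S q (a + 1) (b + 1)).ncard : ℚ) =
          (S q a (b + 1)).ncard + (S q (a + 1) b).ncard := by
        exact_mod_cast congrArg (Nat.cast (R := ℚ)) (ncard_decomp h)
      have key1 : ((S q a (b + 1)).ncard : ℚ) * ((a : ℚ) + 1) =
          ((a : ℚ) + 1 - q * (b + 1)) * Nat.choose (a + b + 1) (b + 1) := by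
        rcases Nat.lt_or_ge a (q * (b + 1)) with hlt | hge
        · have hz := S_eq_empty (q := q) hlt
          have heq : q * (b + 1) = a + 1 := by omega
          have hc : (q : ℚ) * ((b : ℚ) + 1) = (a : ℚ) + 1 := by exact_mod_cast heq
          rw [hz, Set.ncard_empty]
          push_cast
          linear_combination (Nat.choose (a + b + 1) (b + 1) : ℚ) * hc
        · have := iha hge
          rw [show a + (b + 1) = a + b + 1 from rfl] at this
          push_cast at this ⊢
          linear_combination this
      have key2 : ((S q (a + 1) b).ncard : ℚ) * ((a : ℚ) + 2) =
          ((a : ℚ) + 2 - q * b) * Nat.choose (a + b + 1) b := by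
        have := ihb (a + 1)
          (le_trans (Nat.mul_le_mul_left q (Nat.le_succ b)) h)
        rw [show a + 1 + b = a + b + 1 by omega] at this
        push_cast at this ⊢
        linear_combination this
      have h2cast : (Nat.choose (a + b + 2) (b + 1) : ℚ) =
          (Nat.choose (a + b + 1) b : ℚ) + Nat.choose (a + b + 1) (b + 1) := by
        exact_mod_cast congrArg (Nat.cast (R := ℚ)) (Nat.choose_succ_succ (a + b + 1) b)
      have hrel : ((a : ℚ) + 1) * Nat.choose (a + b + 1) b =
          ((b : ℚ) + 1) * Nat.choose (a + b + 1) (b + 1) := by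
        have h1 := Nat.add_one_mul_choose_eq (a + b + 1) b
        have h1c : ((a : ℚ) + b + 2) * Nat.choose (a + b + 1) b =
            (Nat.choose (a + b + 2) (b + 1) : ℚ) * ((b : ℚ) + 1) := by
          exact_mod_cast congrArg (Nat.cast (R := ℚ)) h1
        linear_combination h1c + ((b : ℚ) + 1) * h2cast
      have hmul : ((a : ℚ) + 1) * (((S q (a + 1) (b + 1)).ncard : ℚ) * ((a : ℚ) + 1 + 1)) =
          ((a : ℚ) + 1) * ((((a : ℚ) + 1) + 1 - q * (b + 1)) * Nat.choose (a + b + 2) (b + 1)) := by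
        rw [hcard]
        linear_combination ((a : ℚ) + 2) * key1 + ((a : ℚ) + 1) * key2 + (q : ℚ) * hrel -
          ((a : ℚ) + 1) * ((a : ℚ) + 2 - q * b - q) * h2cast
      have hcancel := mul_left_cancel₀ (a := ((a : ℚ) + 1)) (by positivity) hmul
      rw [show a + 1 + (b + 1) = a + b + 2 by omega]
      push_cast
      linear_combination hcancel

end QBallotAux

/-- For `q, n ≥ 0`, the number of `q`-ballot sequences with `n` 1's (`q`-satisfying
sequences with exactly `n` 1's and `qn` 0's) equals the generalized Catalan number
`C_n^q = (1/(qn+1)) · C((q+1)n, n)`. -/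
theorem count_q_ballot (q n : ℕ) :
    (Nat.card {l : List Bool //
        l.count true = n ∧ l.count false = q * n ∧ QSatisfying q l} : ℚ) =
      1 / (q * n + 1) * Nat.choose ((q + 1) * n) n := by
  have h := QBallotAux.main q n (q * n) le_rfl
  have hcard : (Nat.card {l : List Bool //
      l.count true = n ∧ l.count false = q * n ∧ QSatisfying q l}) =
      (QBallotAux.S q (q * n) n).ncard := Nat.card_coe_set_eq _
  rw [hcard]
  rw [show q * n + n = (q + 1) * n by ring] at h
  have hpos : ((q : ℚ) * n + 1) ≠ 0 := by positivity
  push_cast at h ⊢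
  field_simp
  linear_combination h
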